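/- Let H : (0,∞) → (1/2,1) be differentiable. For t > 0 and x ∈ ℝ, let p(t,x) = (2π t^{2H_t})^{−1/2} exp( −x² / (2 t^{2H_t}) ) be the transition density of fractional Brownian motion with variable Hurst parameter (the density of the centered Gaussian law with variance t^{2H_t}). Then p satisfies the Fokker–Planck-type equation ∂_t p(t,x) = ( H'(t) ln(t) + H_t / t ) t^{2H_t} ∂²_x p(t,x) for all t > 0 and x ∈ ℝ. -/

import Mathlib

open MeasureTheory Set Filter

/-- The Beta function `β(x,y) = Γ(x)Γ(y)/Γ(x+y)`. -/
noncomputable def Beta (x y : ℝ) : ℝ := Real.Gamma x * Real.Gamma y / Real.Gamma (x + y)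

/-- The normalizing constant `c_H = (H(2H−1)/β(2−2H, H−1/2))^{1/2}`. -/
noncomputable def cH (H : ℝ) : ℝ := Real.sqrt (H * (2 * H - 1) / Beta (2 - 2 * H) (H - 1 / 2))

/-- The kernel `K_H(t,s)`; equal to
`c_{H_t} s^{1/2−H_t} ∫_s^t (u−s)^{H_t−3/2} u^{H_t−1/2} du` for `s ≤ t` and `0` for `s > t`. -/
noncomputable def KH (H : ℝ → ℝ) (t s : ℝ) : ℝ :=
  if s ≤ t then
    cH (H t) * s ^ ((1 : ℝ) / 2 - H t) *
      ∫ u in s..t, (u - s) ^ (H t - 3 / 2) * u ^ (H t - 1 / 2)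
  else 0

/-- The covariance function `R_H(t,s) = ∫_0^{min(s,t)} K_H(t,u) K_H(s,u) du`. -/
noncomputable def RH (H : ℝ → ℝ) (t s : ℝ) : ℝ :=
  ∫ u in (0 : ℝ)..(min s t), KH H t u * KH H s u

/-- Fokker–Planck-type equation for the transition densities
`p(t,x) = (2π t^{2H_t})^{−1/2} exp(−x²/(2 t^{2H_t}))` of fBMvH:
`∂_t p(t,x) = (H'(t) ln t + H_t/t) t^{2H_t} ∂²_x p(t,x)`. -/

theorem fokker_planck_fBMvH (H : ℝ → ℝ)
    (hH : ∀ t : ℝ, 0 < t → H t ∈ Set.Ioo (1 / 2 : ℝ) 1)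
    (hdiff : ∀ t : ℝ, 0 < t → DifferentiableAt ℝ H t)
    (p : ℝ → ℝ → ℝ)
    (hp : ∀ t x : ℝ, p t x
      = (2 * Real.pi * t ^ (2 * H t)) ^ (-(1 : ℝ) / 2)
          * Real.exp (-x ^ 2 / (2 * t ^ (2 * H t))))
    (t x : ℝ) (ht : 0 < t) :
    deriv (fun τ => p τ x) t
      = (deriv H t * Real.log t + H t / t) * t ^ (2 * H t) * deriv (deriv (p t)) x := by
  have hpi : (0:ℝ) < Real.pi := Real.pi_pos
  set A : ℝ := t ^ (2 * H t) with hAdef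
  have hApos : 0 < A := Real.rpow_pos_of_pos ht _
  have hBpos : 0 < 2 * Real.pi * A := by positivity
  set G : ℝ := 1 * (2 * H t) * t ^ (2 * H t - 1)
      + 2 * deriv H t * t ^ (2 * H t) * Real.log t with hGdef
  -- derivative of the variance function
  have hg : HasDerivAt (fun τ : ℝ => τ ^ (2 * H τ)) G t := by
    have := (hasDerivAt_id t).rpow
      (((hdiff t ht).hasDerivAt).const_mul 2) (by simpa using ht)
    simpa [hGdef] using this
  -- derivative of the prefactor
  have hc : HasDerivAt (fun τ : ℝ => (2 * Real.pi * τ ^ (2 * H τ)) ^ (-(1:ℝ) / 2))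
      ((2 * Real.pi * G) * (-(1:ℝ)/2) * (2 * Real.pi * A) ^ (-(1:ℝ)/2 - 1)) t :=
    (hg.const_mul (2 * Real.pi)).rpow_const (Or.inl (ne_of_gt hBpos))
  -- derivative of the exponent (in τ)
  have hq : HasDerivAt (fun τ : ℝ => -x ^ 2 / (2 * τ ^ (2 * H τ)))
      ((0 * (2 * A) - (-x ^ 2) * (2 * G)) / (2 * A) ^ 2) t :=
    (hasDerivAt_const t (-x ^ 2)).div (hg.const_mul 2) (by positivity)
  have he : HasDerivAt (fun τ : ℝ => Real.exp (-x ^ 2 / (2 * τ ^ (2 * H τ))))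
      (Real.exp (-x ^ 2 / (2 * A)) * ((0 * (2 * A) - (-x ^ 2) * (2 * G)) / (2 * A) ^ 2)) t :=
    hq.exp
  have hLHS : deriv (fun τ => p τ x) t
      = (2 * Real.pi * G) * (-(1:ℝ)/2) * (2 * Real.pi * A) ^ (-(1:ℝ)/2 - 1)
          * Real.exp (-x ^ 2 / (2 * A))
        + (2 * Real.pi * A) ^ (-(1:ℝ)/2)
          * (Real.exp (-x ^ 2 / (2 * A)) * ((0 * (2 * A) - (-x ^ 2) * (2 * G)) / (2 * A) ^ 2)) := by
    have : (fun τ => p τ x) = fun τ =>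
        (2 * Real.pi * τ ^ (2 * H τ)) ^ (-(1:ℝ) / 2)
          * Real.exp (-x ^ 2 / (2 * τ ^ (2 * H τ))) := funext fun τ => hp τ x
    rw [this]
    exact (hc.mul he).deriv
  -- first spatial derivative, at every point
  have hdx : ∀ y : ℝ, HasDerivAt (p t)
      ((2 * Real.pi * A) ^ (-(1:ℝ)/2)
        * (Real.exp (-y ^ 2 / (2 * A)) * (-(2 * y) / (2 * A)))) y := by
    intro y
    have hq1 : HasDerivAt (fun y : ℝ => -y ^ 2 / (2 * A)) (-(2 * y) / (2 * A)) y := by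
      have : HasDerivAt (fun y : ℝ => -y ^ 2) (-(2 * y)) y := by
        simpa using (hasDerivAt_pow 2 y).fun_neg
      exact this.div_const _
    have := (hq1.exp.const_mul ((2 * Real.pi * A) ^ (-(1:ℝ)/2)))
    have hpt : p t = fun y : ℝ => (2 * Real.pi * A) ^ (-(1:ℝ)/2)
        * Real.exp (-y ^ 2 / (2 * A)) := funext fun y => hp t y
    rw [hpt]
    exact this
  have hderiv1 : deriv (p t) = fun y =>
      (2 * Real.pi * A) ^ (-(1:ℝ)/2)
        * (Real.exp (-y ^ 2 / (2 * A)) * (-(2 * y) / (2 * A))) :=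
    funext fun y => (hdx y).deriv
  -- second spatial derivative
  have hd2 : HasDerivAt (fun y => (2 * Real.pi * A) ^ (-(1:ℝ)/2)
        * (Real.exp (-y ^ 2 / (2 * A)) * (-(2 * y) / (2 * A))))
      ((2 * Real.pi * A) ^ (-(1:ℝ)/2)
        * (Real.exp (-x ^ 2 / (2 * A)) * (-(2 * x) / (2 * A)) * (-(2 * x) / (2 * A))
          + Real.exp (-x ^ 2 / (2 * A)) * (-2 / (2 * A)))) x := by
    have hq1 : HasDerivAt (fun y : ℝ => -y ^ 2 / (2 * A)) (-(2 * x) / (2 * A)) x := by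
      have : HasDerivAt (fun y : ℝ => -y ^ 2) (-(2 * x)) x := by
        simpa using (hasDerivAt_pow 2 x).fun_neg
      exact this.div_const _
    have hlin : HasDerivAt (fun y : ℝ => -(2 * y) / (2 * A)) (-2 / (2 * A)) x := by
      have : HasDerivAt (fun y : ℝ => -(2 * y)) (-2) x := by
        simpa using ((hasDerivAt_id x).const_mul 2).fun_neg
      exact this.div_const _
    exact ((hq1.exp.mul hlin).const_mul _)
  have hRHS : deriv (deriv (p t)) x
      = (2 * Real.pi * A) ^ (-(1:ℝ)/2)
        * (Real.exp (-x ^ 2 / (2 * A)) * (-(2 * x) / (2 * A)) * (-(2 * x) / (2 * A))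
          + Real.exp (-x ^ 2 / (2 * A)) * (-2 / (2 * A))) := by
    rw [hderiv1]
    exact hd2.deriv
  rw [hLHS, hRHS]
  have h1 : t ^ (2 * H t - 1) = A / t := by
    rw [hAdef, Real.rpow_sub ht, Real.rpow_one]
  have h2 : (2 * Real.pi * A) ^ (-(1:ℝ)/2 - 1)
      = (2 * Real.pi * A) ^ (-(1:ℝ)/2) / (2 * Real.pi * A) := by
    rw [Real.rpow_sub hBpos, Real.rpow_one]
  rw [hGdef, h1, h2]
  set C : ℝ := (2 * Real.pi * A) ^ (-(1:ℝ)/2)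
  set E : ℝ := Real.exp (-x ^ 2 / (2 * A))
  field_simp
  ring
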